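/- For all jointly distributed random variables A, B, X, Y with finite ranges, H(A | X,B) + H(A | Y,B) ≤ H(A | B) + Γ, where Γ = log₂( Σ_{a,b,x,y : p(a,b,x)>0 and p(a,b,y)>0} p(b,x)·p(b,y)/p(b) ). -/

import Mathlib

open Finset

noncomputable section

/-- Probability of an event under a distribution on a finite sample space. -/
def pr {Ω : Type*} [Fintype Ω] (p : Ω → ℝ) (E : Set Ω) : ℝ :=
  ∑ ω, E.indicator p ω

/-- `p` is a probability mass function on the finite sample space `Ω`. -/
def IsPMF {Ω : Type*} [Fintype Ω] (p : Ω → ℝ) : Prop :=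
  (∀ ω, 0 ≤ p ω) ∧ ∑ ω, p ω = 1

/-- Shannon entropy (base 2) of a random variable `V` on a finite sample space. -/
def ent {Ω β : Type*} [Fintype Ω] [Fintype β] (p : Ω → ℝ) (V : Ω → β) : ℝ :=
  -∑ v, pr p {ω | V ω = v} * Real.logb 2 (pr p {ω | V ω = v})

/-- Conditional Shannon entropy (base 2): `H(V | W)`. -/
def condEnt {Ω β γ : Type*} [Fintype Ω] [Fintype β] [Fintype γ]
    (p : Ω → ℝ) (V : Ω → β) (W : Ω → γ) : ℝ :=
  ent p (fun ω => (V ω, W ω)) - ent p W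

/-- Mutual information (base 2): `I(V : W)`. -/
def mi {Ω β γ : Type*} [Fintype Ω] [Fintype β] [Fintype γ]
    (p : Ω → ℝ) (V : Ω → β) (W : Ω → γ) : ℝ :=
  ent p V + ent p W - ent p (fun ω => (V ω, W ω))

/-- Conditional mutual information (base 2): `I(V : W | U)`. -/
def cmi {Ω β γ δ : Type*} [Fintype Ω] [Fintype β] [Fintype γ] [Fintype δ]
    (p : Ω → ℝ) (V : Ω → β) (W : Ω → γ) (U : Ω → δ) : ℝ :=
  ent p (fun ω => (V ω, U ω)) + ent p (fun ω => (W ω, U ω))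
    - ent p (fun ω => (V ω, W ω, U ω)) - ent p U

end

section Aux
open scoped Classical
variable {Ω : Type*} [Fintype Ω] (p : Ω → ℝ)

lemma pr_nonneg (h : ∀ ω, 0 ≤ p ω) (E : Set Ω) : 0 ≤ pr p E :=
  Finset.sum_nonneg fun ω _ => Set.indicator_nonneg (fun a _ => h a) ω

lemma pr_congr {E F : Set Ω} (h : ∀ ω, ω ∈ E ↔ ω ∈ F) : pr p E = pr p F := by
  rw [Set.ext h]

lemma pr_univ (h : ∑ ω, p ω = 1) : pr p Set.univ = 1 := by
  simpa [pr] using h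

lemma pr_marg {β : Type*} [Fintype β] (V : Ω → β) (E : Set Ω) :
    pr p E = ∑ v, pr p {ω | V ω = v ∧ ω ∈ E} := by
  unfold pr
  rw [Finset.sum_comm]
  refine Finset.sum_congr rfl fun ω _ => ?_
  simp only [Set.indicator_apply, Set.mem_setOf_eq, ite_and]
  rw [Finset.sum_ite_eq]
  simp

lemma condEnt_eq {β γ : Type*} [Fintype β] [Fintype γ] (V : Ω → β) (W : Ω → γ) :
    condEnt p V W = ∑ v, ∑ w, pr p {ω | V ω = v ∧ W ω = w} *
      (Real.logb 2 (pr p {ω | W ω = w}) -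
        Real.logb 2 (pr p {ω | V ω = v ∧ W ω = w})) := by
  have hset : ∀ v w, {ω | (V ω, W ω) = (v, w)} = {ω | V ω = v ∧ W ω = w} := by
    intro v w; ext ω; simp [Prod.ext_iff]
  have h1 : ent p (fun ω => (V ω, W ω)) =
      -∑ v, ∑ w, pr p {ω | V ω = v ∧ W ω = w} *
        Real.logb 2 (pr p {ω | V ω = v ∧ W ω = w}) := by
    unfold ent
    rw [Fintype.sum_prod_type]
    simp only [hset]
  have h2 : ent p W = -∑ v, ∑ w, pr p {ω | V ω = v ∧ W ω = w} *
      Real.logb 2 (pr p {ω | W ω = w}) := by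
    unfold ent
    rw [Finset.sum_comm]
    congr 1
    refine Finset.sum_congr rfl fun w _ => ?_
    rw [pr_marg p V {ω | W ω = w}, Finset.sum_mul]
    rfl
  unfold condEnt
  rw [h1, h2, neg_sub_neg, ← Finset.sum_sub_distrib]
  refine Finset.sum_congr rfl fun v _ => ?_
  rw [← Finset.sum_sub_distrib]
  refine Finset.sum_congr rfl fun w _ => ?_
  ring


lemma condEnt_pair_eq {α β χ : Type*} [Fintype α] [Fintype β] [Fintype χ]
    (A : Ω → α) (X : Ω → χ) (B : Ω → β) :
    condEnt p A (fun ω => (X ω, B ω)) =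
      ∑ a, ∑ b, ∑ x, pr p {ω | A ω = a ∧ B ω = b ∧ X ω = x} *
        (Real.logb 2 (pr p {ω | B ω = b ∧ X ω = x}) -
          Real.logb 2 (pr p {ω | A ω = a ∧ B ω = b ∧ X ω = x})) := by
  rw [condEnt_eq]
  refine Finset.sum_congr rfl fun a _ => ?_
  rw [Fintype.sum_prod_type, Finset.sum_comm]
  refine Finset.sum_congr rfl fun b _ => Finset.sum_congr rfl fun x _ => ?_
  have h1 : {ω | A ω = a ∧ (X ω, B ω) = (x, b)} = {ω | A ω = a ∧ B ω = b ∧ X ω = x} := by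
    ext ω; simp only [Set.mem_setOf_eq, Prod.mk.injEq]; tauto
  have h2 : {ω | (X ω, B ω) = (x, b)} = {ω | B ω = b ∧ X ω = x} := by
    ext ω; simp only [Set.mem_setOf_eq, Prod.mk.injEq]; tauto
  rw [h1, h2]

lemma gibbs {ι : Type*} [Fintype ι] (m w : ι → ℝ)
    (hm : ∀ i, 0 ≤ m i) (hsum : ∑ i, m i = 1)
    (hw : ∀ i, 0 < m i → 0 < w i) :
    ∑ i, m i * (Real.logb 2 (w i) - Real.logb 2 (m i)) ≤
      Real.logb 2 (∑ i, if 0 < m i then w i else 0) := by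
  set S := ∑ i, if 0 < m i then w i else 0 with hS
  have hex : ∃ j, 0 < m j := by
    by_contra h; push_neg at h
    have : ∑ i, m i = 0 := Finset.sum_eq_zero fun i _ => le_antisymm (h i) (hm i)
    rw [hsum] at this; norm_num at this
  obtain ⟨j, hj⟩ := hex
  have hS0 : 0 < S := by
    refine Finset.sum_pos' (fun i _ => ?_) ⟨j, Finset.mem_univ j, ?_⟩
    · by_cases h : 0 < m i <;> simp [h, le_of_lt, hw]
    · simp [hj, hw j hj]
  have key : ∑ i, m i * (Real.log (w i) - Real.log (m i)) ≤ Real.log S := by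
    have h1 : ∀ i, m i * (Real.log (w i) - Real.log (m i)) - m i * Real.log S
        ≤ (if 0 < m i then w i else 0) / S - m i := by
      intro i
      by_cases hmi : 0 < m i
      · have hwi := hw i hmi
        have hpos : 0 < w i / (m i * S) := by positivity
        have hlog := Real.log_le_sub_one_of_pos hpos
        have heq : Real.log (w i) - Real.log (m i) - Real.log S =
            Real.log (w i / (m i * S)) := by
          rw [Real.log_div (ne_of_gt hwi) (by positivity),
            Real.log_mul (ne_of_gt hmi) (ne_of_gt hS0)]
          ring
        have h3 : m i * (Real.log (w i) - Real.log (m i)) - m i * Real.log S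
            = m i * Real.log (w i / (m i * S)) := by rw [← heq]; ring
        rw [h3, if_pos hmi]
        calc m i * Real.log (w i / (m i * S))
            ≤ m i * (w i / (m i * S) - 1) :=
              mul_le_mul_of_nonneg_left hlog (le_of_lt hmi)
          _ = w i / S - m i := by field_simp
      · have h0 : m i = 0 := le_antisymm (le_of_not_gt hmi) (hm i)
        simp [h0, hmi]
    have h2 := Finset.sum_le_sum fun i (_ : i ∈ Finset.univ) => h1 i
    rw [Finset.sum_sub_distrib, Finset.sum_sub_distrib, ← Finset.sum_mul, hsum,
      one_mul, ← Finset.sum_div, ← hS, div_self (ne_of_gt hS0)] at h2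
    linarith
  have hlog2 : (0:ℝ) < Real.log 2 := Real.log_pos one_lt_two
  simp only [Real.logb]
  have : ∑ i, m i * (Real.log (w i) / Real.log 2 - Real.log (m i) / Real.log 2)
      = (∑ i, m i * (Real.log (w i) - Real.log (m i))) / Real.log 2 := by
    rw [Finset.sum_div]
    refine Finset.sum_congr rfl fun i _ => ?_
    field_simp
  rw [this]
  gcongr
lemma main_aux {α β χ υ : Type*} [Fintype α] [Fintype β] [Fintype χ] [Fintype υ]
    (P : α → β → χ → ℝ) (Q : α → β → υ → ℝ) (R : α → β → ℝ)
    (Gx : β → χ → ℝ) (Gy : β → υ → ℝ) (G : β → ℝ)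
    (hP0 : ∀ a b x, 0 ≤ P a b x) (hQ0 : ∀ a b y, 0 ≤ Q a b y)
    (hPsum : ∀ a b, ∑ x, P a b x = R a b)
    (hQsum : ∀ a b, ∑ y, Q a b y = R a b)
    (hGx : ∀ b x, Gx b x = ∑ a, P a b x)
    (hGy : ∀ b y, Gy b y = ∑ a, Q a b y)
    (hG : ∀ b, G b = ∑ a, R a b)
    (hRsum : ∑ a, ∑ b, R a b = 1) :
    (∑ a, ∑ b, ∑ x, P a b x * (Real.logb 2 (Gx b x) - Real.logb 2 (P a b x))) +
      (∑ a, ∑ b, ∑ y, Q a b y * (Real.logb 2 (Gy b y) - Real.logb 2 (Q a b y))) ≤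
    (∑ a, ∑ b, R a b * (Real.logb 2 (G b) - Real.logb 2 (R a b))) +
      Real.logb 2 (∑ a, ∑ b, ∑ x, ∑ y,
        if 0 < P a b x ∧ 0 < Q a b y then Gx b x * Gy b y / G b else 0) := by
  have hR0 : ∀ a b, 0 ≤ R a b := fun a b =>
    (hPsum a b) ▸ Finset.sum_nonneg fun x _ => hP0 a b x
  have hPleR : ∀ a b x, P a b x ≤ R a b := fun a b x =>
    (hPsum a b) ▸ Finset.single_le_sum (fun x _ => hP0 a b x) (Finset.mem_univ x)
  have hQleR : ∀ a b y, Q a b y ≤ R a b := fun a b y =>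
    (hQsum a b) ▸ Finset.single_le_sum (fun y _ => hQ0 a b y) (Finset.mem_univ y)
  have hPleGx : ∀ a b x, P a b x ≤ Gx b x := fun a b x =>
    (hGx b x) ▸ Finset.single_le_sum (fun a _ => hP0 a b x) (Finset.mem_univ a)
  have hQleGy : ∀ a b y, Q a b y ≤ Gy b y := fun a b y =>
    (hGy b y) ▸ Finset.single_le_sum (fun a _ => hQ0 a b y) (Finset.mem_univ a)
  have hRleG : ∀ a b, R a b ≤ G b := fun a b =>
    (hG b) ▸ Finset.single_le_sum (fun a _ => hR0 a b) (Finset.mem_univ a)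
  have hMy : ∀ a b x, ∑ y, P a b x * Q a b y / R a b = P a b x := by
    intro a b x
    rw [← Finset.sum_div, ← Finset.mul_sum, hQsum]
    rcases eq_or_lt_of_le (hR0 a b) with h | h
    · have : P a b x = 0 := le_antisymm (h ▸ hPleR a b x) (hP0 a b x)
      simp [this]
    · field_simp
  have hMx : ∀ a b y, ∑ x, P a b x * Q a b y / R a b = Q a b y := by
    intro a b y
    rw [← Finset.sum_div, ← Finset.sum_mul, hPsum]
    rcases eq_or_lt_of_le (hR0 a b) with h | h
    · have : Q a b y = 0 := le_antisymm (h ▸ hQleR a b y) (hQ0 a b y)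
      simp [this]
    · field_simp
  have hMxy : ∀ a b, ∑ x, ∑ y, P a b x * Q a b y / R a b = R a b := by
    intro a b
    simp only [hMy]
    exact hPsum a b
  -- positivity facts
  have hposP : ∀ a b x y, 0 < P a b x * Q a b y / R a b → 0 < P a b x := by
    intro a b x y h
    rcases eq_or_lt_of_le (hP0 a b x) with hP | hP
    · rw [← hP, zero_mul, zero_div] at h; exact absurd h (lt_irrefl 0)
    · exact hP
  have hposQ : ∀ a b x y, 0 < P a b x * Q a b y / R a b → 0 < Q a b y := by
    intro a b x y h
    rcases eq_or_lt_of_le (hQ0 a b y) with hQ | hQ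
    · rw [← hQ, mul_zero, zero_div] at h; exact absurd h (lt_irrefl 0)
    · exact hQ
  have hcond : ∀ a b x y,
      (0 < P a b x * Q a b y / R a b ↔ 0 < P a b x ∧ 0 < Q a b y) := by
    intro a b x y
    constructor
    · intro h; exact ⟨hposP a b x y h, hposQ a b x y h⟩
    · rintro ⟨hP, hQ⟩
      have hR : 0 < R a b := lt_of_lt_of_le hP (hPleR a b x)
      positivity
  -- Rewrite LHS terms as quadruple sums
  have e1 : (∑ a, ∑ b, ∑ x, P a b x * (Real.logb 2 (Gx b x) - Real.logb 2 (P a b x)))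
      = ∑ a, ∑ b, ∑ x, ∑ y, P a b x * Q a b y / R a b *
          (Real.logb 2 (Gx b x) - Real.logb 2 (P a b x)) := by
    refine Finset.sum_congr rfl fun a _ => Finset.sum_congr rfl fun b _ =>
      Finset.sum_congr rfl fun x _ => ?_
    rw [← Finset.sum_mul, hMy]
  have e2 : (∑ a, ∑ b, ∑ y, Q a b y * (Real.logb 2 (Gy b y) - Real.logb 2 (Q a b y)))
      = ∑ a, ∑ b, ∑ x, ∑ y, P a b x * Q a b y / R a b *
          (Real.logb 2 (Gy b y) - Real.logb 2 (Q a b y)) := by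
    refine Finset.sum_congr rfl fun a _ => Finset.sum_congr rfl fun b _ => ?_
    rw [Finset.sum_comm]
    refine Finset.sum_congr rfl fun y _ => ?_
    rw [← Finset.sum_mul, hMx]
  have e3 : (∑ a, ∑ b, R a b * (Real.logb 2 (G b) - Real.logb 2 (R a b)))
      = ∑ a, ∑ b, ∑ x, ∑ y, P a b x * Q a b y / R a b *
          (Real.logb 2 (G b) - Real.logb 2 (R a b)) := by
    refine Finset.sum_congr rfl fun a _ => Finset.sum_congr rfl fun b _ => ?_
    rw [show (∑ x, ∑ y, P a b x * Q a b y / R a b *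
          (Real.logb 2 (G b) - Real.logb 2 (R a b)))
        = (∑ x, ∑ y, P a b x * Q a b y / R a b) *
          (Real.logb 2 (G b) - Real.logb 2 (R a b)) by
      rw [Finset.sum_mul]
      exact Finset.sum_congr rfl fun x _ => (Finset.sum_mul _ _ _).symm]
    rw [hMxy]
  -- pointwise identity
  have hpt : ∀ a b x y,
      P a b x * Q a b y / R a b * (Real.logb 2 (Gx b x) - Real.logb 2 (P a b x)) +
      P a b x * Q a b y / R a b * (Real.logb 2 (Gy b y) - Real.logb 2 (Q a b y)) -
      P a b x * Q a b y / R a b * (Real.logb 2 (G b) - Real.logb 2 (R a b)) =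
      P a b x * Q a b y / R a b *
        (Real.logb 2 (Gx b x * Gy b y / G b) -
          Real.logb 2 (P a b x * Q a b y / R a b)) := by
    intro a b x y
    by_cases h : 0 < P a b x * Q a b y / R a b
    · have hP := hposP a b x y h
      have hQ := hposQ a b x y h
      have hR : 0 < R a b := lt_of_lt_of_le hP (hPleR a b x)
      have hGx' : 0 < Gx b x := lt_of_lt_of_le hP (hPleGx a b x)
      have hGy' : 0 < Gy b y := lt_of_lt_of_le hQ (hQleGy a b y)
      have hG' : 0 < G b := lt_of_lt_of_le hR (hRleG a b)
      rw [Real.logb_div (by positivity) (ne_of_gt hG'),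
        Real.logb_mul (ne_of_gt hGx') (ne_of_gt hGy'),
        Real.logb_div (by positivity) (ne_of_gt hR),
        Real.logb_mul (ne_of_gt hP) (ne_of_gt hQ)]
      ring
    · have h0 : P a b x * Q a b y / R a b = 0 :=
        le_antisymm (le_of_not_gt h)
          (div_nonneg (mul_nonneg (hP0 a b x) (hQ0 a b y)) (hR0 a b))
      rw [h0]; ring
  -- Gibbs inequality on quadruples
  have hgib := gibbs (ι := α × β × χ × υ)
    (fun i => P i.1 i.2.1 i.2.2.1 * Q i.1 i.2.1 i.2.2.2 / R i.1 i.2.1)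
    (fun i => Gx i.2.1 i.2.2.1 * Gy i.2.1 i.2.2.2 / G i.2.1)
    (fun i => div_nonneg (mul_nonneg (hP0 _ _ _) (hQ0 _ _ _)) (hR0 _ _))
    (by
      simp only [Fintype.sum_prod_type]
      calc ∑ a, ∑ b, ∑ x, ∑ y, P a b x * Q a b y / R a b
          = ∑ a, ∑ b, R a b :=
            Finset.sum_congr rfl fun a _ => Finset.sum_congr rfl fun b _ => hMxy a b
        _ = 1 := hRsum)
    (by
      rintro ⟨a, b, x, y⟩ h
      have hP := hposP a b x y h
      have hQ := hposQ a b x y h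
      have hR : 0 < R a b := lt_of_lt_of_le hP (hPleR a b x)
      have hGx' : 0 < Gx b x := lt_of_lt_of_le hP (hPleGx a b x)
      have hGy' : 0 < Gy b y := lt_of_lt_of_le hQ (hQleGy a b y)
      have hG' : 0 < G b := lt_of_lt_of_le hR (hRleG a b)
      exact div_pos (mul_pos hGx' hGy') hG')
  simp only [Fintype.sum_prod_type, hcond] at hgib
  -- combine sums
  have comb : (∑ a, ∑ b, ∑ x, ∑ y, P a b x * Q a b y / R a b *
        (Real.logb 2 (Gx b x) - Real.logb 2 (P a b x))) +
      (∑ a, ∑ b, ∑ x, ∑ y, P a b x * Q a b y / R a b *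
        (Real.logb 2 (Gy b y) - Real.logb 2 (Q a b y))) -
      (∑ a, ∑ b, ∑ x, ∑ y, P a b x * Q a b y / R a b *
        (Real.logb 2 (G b) - Real.logb 2 (R a b))) =
      ∑ a, ∑ b, ∑ x, ∑ y, P a b x * Q a b y / R a b *
        (Real.logb 2 (Gx b x * Gy b y / G b) -
          Real.logb 2 (P a b x * Q a b y / R a b)) := by
    simp only [← Finset.sum_add_distrib, ← Finset.sum_sub_distrib]
    exact Finset.sum_congr rfl fun a _ => Finset.sum_congr rfl fun b _ =>
      Finset.sum_congr rfl fun x _ => Finset.sum_congr rfl fun y _ => hpt a b x y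
  linarith [e1, e2, e3, comb, hgib]

end Aux

open scoped Classical in
/-- Unconditional version of [KR11] with error term `Γ`. -/
theorem stmt_4 {Ω α β χ υ : Type*}
    [Fintype Ω] [Fintype α] [Fintype β] [Fintype χ] [Fintype υ]
    (p : Ω → ℝ) (hp : IsPMF p)
    (A : Ω → α) (B : Ω → β) (X : Ω → χ) (Y : Ω → υ) :
    condEnt p A (fun ω => (X ω, B ω)) + condEnt p A (fun ω => (Y ω, B ω)) ≤
      condEnt p A B +
        Real.logb 2 (∑ a : α, ∑ b : β, ∑ x : χ, ∑ y : υ,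
          if 0 < pr p {ω | A ω = a ∧ B ω = b ∧ X ω = x} ∧
             0 < pr p {ω | A ω = a ∧ B ω = b ∧ Y ω = y} then
            pr p {ω | B ω = b ∧ X ω = x} * pr p {ω | B ω = b ∧ Y ω = y}
              / pr p {ω | B ω = b}
          else 0) := by
  obtain ⟨hp0, hp1⟩ := hp
  rw [condEnt_pair_eq p A X B, condEnt_pair_eq p A Y B, condEnt_eq p A B]
  refine main_aux _ _ _ _ _ _
    (fun a b x => pr_nonneg p hp0 _) (fun a b y => pr_nonneg p hp0 _)
    ?_ ?_ ?_ ?_ ?_ ?_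
  · intro a b
    rw [pr_marg p X {ω | A ω = a ∧ B ω = b}]
    exact Finset.sum_congr rfl fun x _ => pr_congr p fun ω => by
      simp only [Set.mem_setOf_eq]; try tauto
  · intro a b
    rw [pr_marg p Y {ω | A ω = a ∧ B ω = b}]
    exact Finset.sum_congr rfl fun y _ => pr_congr p fun ω => by
      simp only [Set.mem_setOf_eq]; try tauto
  · intro b x
    rw [pr_marg p A {ω | B ω = b ∧ X ω = x}]
    exact Finset.sum_congr rfl fun a _ => pr_congr p fun ω => by
      simp only [Set.mem_setOf_eq]; try tauto
  · intro b y
    rw [pr_marg p A {ω | B ω = b ∧ Y ω = y}]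
    exact Finset.sum_congr rfl fun a _ => pr_congr p fun ω => by
      simp only [Set.mem_setOf_eq]; try tauto
  · intro b
    rw [pr_marg p A {ω | B ω = b}]
    exact Finset.sum_congr rfl fun a _ => pr_congr p fun ω => by
      simp only [Set.mem_setOf_eq]; try tauto
  · have h1 : pr p Set.univ = 1 := pr_univ p hp1
    rw [pr_marg p A Set.univ] at h1
    rw [← h1]
    refine Finset.sum_congr rfl fun a _ => ?_
    rw [pr_marg p B {ω | A ω = a ∧ ω ∈ Set.univ}]
    exact Finset.sum_congr rfl fun b _ => pr_congr p fun ω => by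
      simp only [Set.mem_setOf_eq, Set.mem_univ]; try tauto
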